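/- Let w ∈ C¹([-1/2,1/2]) and n(t) = N((0,w(t))ᵀ). Then ∫_{-1/2}^{1/2} |n'(t)| dt ≤ arccos(n(-1/2)·n(1/2)) + 2∫_{-1/2}^{1/2} |min(0, w'(t))| dt, using that |n'(t)| ≤ |w'(t)| pointwise. -/

import Mathlib

open Real

/-- The Gauss map of a graph: N(v) = (1+|v|²)^{-1/2} (v₁, v₂, -1) ∈ S² ⊂ ℝ³. -/
noncomputable def Nmap (v : Fin 2 → ℝ) : EuclideanSpace ℝ (Fin 3) :=
  (Real.sqrt (1 + v 0 ^ 2 + v 1 ^ 2))⁻¹ •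
    (WithLp.equiv 2 (Fin 3 → ℝ)).symm ![v 0, v 1, -1]

lemma inner_Nmap (a b : ℝ) : (inner ℝ (Nmap ![0, a]) (Nmap ![0, b]) : ℝ)
    = (1 + a * b) / (Real.sqrt (1 + a ^ 2) * Real.sqrt (1 + b ^ 2)) := by
  have ha : Real.sqrt (1 + a ^ 2) > 0 := Real.sqrt_pos.2 (by positivity)
  have hb : Real.sqrt (1 + b ^ 2) > 0 := Real.sqrt_pos.2 (by positivity)
  simp only [Nmap, real_inner_smul_left, real_inner_smul_right, PiLp.inner_apply,
    WithLp.equiv_symm_apply, PiLp.smul_apply, PiLp.toLp_apply, smul_eq_mul, Matrix.cons_val_two, Matrix.tail_cons, Matrix.cons_val_zero, Matrix.cons_val_one, Matrix.head_cons,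
    RCLike.inner_apply, conj_trivial, Fin.sum_univ_three]
  rw [show (1 : ℝ) + 0 ^ 2 + a ^ 2 = 1 + a ^ 2 by ring,
    show (1 : ℝ) + 0 ^ 2 + b ^ 2 = 1 + b ^ 2 by ring]
  field_simp
  ring

lemma arccos_inner_Nmap (a b : ℝ) :
    Real.arccos ((inner ℝ (Nmap ![0, a]) (Nmap ![0, b]) : ℝ)) = |arctan b - arctan a| := by
  have ha : Real.sqrt (1 + a ^ 2) > 0 := Real.sqrt_pos.2 (by positivity)
  have hb : Real.sqrt (1 + b ^ 2) > 0 := Real.sqrt_pos.2 (by positivity)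
  have hcos : Real.cos (arctan b - arctan a)
      = (1 + a * b) / (Real.sqrt (1 + a ^ 2) * Real.sqrt (1 + b ^ 2)) := by
    rw [Real.cos_sub, Real.cos_arctan, Real.sin_arctan, Real.cos_arctan, Real.sin_arctan]
    field_simp
  rw [inner_Nmap, ← hcos, ← Real.cos_abs, Real.arccos_cos (abs_nonneg _)]
  have h1 : |arctan b| < π / 2 := abs_lt.2 ⟨Real.neg_pi_div_two_lt_arctan b, Real.arctan_lt_pi_div_two b⟩
  have h2 : |arctan a| < π / 2 := abs_lt.2 ⟨Real.neg_pi_div_two_lt_arctan a, Real.arctan_lt_pi_div_two a⟩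
  calc |arctan b - arctan a| ≤ |arctan b| + |arctan a| := abs_sub _ _
    _ ≤ π := by linarith

open Set intervalIntegral in
/-- Upper bound for the total variation of the normal: the spherical angle of
the endpoint normals plus twice the mass of the negative part of w'.
Here |n'(t)| = |w'(t)|/(1+w(t)²). -/
theorem stmt17 (w w' : ℝ → ℝ)
    (hw : ∀ t ∈ Icc (-(1:ℝ)/2) (1/2), HasDerivWithinAt w (w' t) (Icc (-(1:ℝ)/2) (1/2)) t)
    (hw' : ContinuousOn w' (Icc (-(1:ℝ)/2) (1/2))) :
    (∫ t in (-(1:ℝ)/2)..(1/2), |w' t| / (1 + (w t) ^ 2))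
      ≤ Real.arccos (inner ℝ (Nmap ![0, w (-(1:ℝ)/2)]) (Nmap ![0, w (1/2)]) : ℝ)
        + 2 * ∫ t in (-(1:ℝ)/2)..(1/2), |min 0 (w' t)| := by
  set a : ℝ := -(1:ℝ)/2
  set b : ℝ := (1:ℝ)/2
  have hab : a ≤ b := by norm_num [a, b]
  have hIcc : uIcc a b = Icc a b := uIcc_of_le hab
  have hwc : ContinuousOn w (Icc a b) := fun t ht => (hw t ht).continuousWithinAt
  have hpos : ∀ t, (0:ℝ) < 1 + (w t) ^ 2 := fun t => by positivity
  -- continuity of the three integrands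
  have hden : ContinuousOn (fun t => 1 + (w t) ^ 2) (Icc a b) :=
    (continuousOn_const.add (hwc.pow 2))
  have hcont1 : ContinuousOn (fun t => |w' t| / (1 + (w t) ^ 2)) (Icc a b) :=
    (hw'.abs).div hden (fun t _ => (hpos t).ne')
  have hcont2 : ContinuousOn (fun t => w' t / (1 + (w t) ^ 2)) (Icc a b) :=
    hw'.div hden (fun t _ => (hpos t).ne')
  have hcont3 : ContinuousOn (fun t => |min 0 (w' t)|) (Icc a b) :=
    (continuous_abs.comp (continuous_const.min continuous_id)).comp_continuousOn hw'
  have hi1 : IntervalIntegrable (fun t => |w' t| / (1 + (w t) ^ 2)) MeasureTheory.volume a b :=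
    hcont1.intervalIntegrable_of_Icc hab
  have hi2 : IntervalIntegrable (fun t => w' t / (1 + (w t) ^ 2)) MeasureTheory.volume a b :=
    hcont2.intervalIntegrable_of_Icc hab
  have hi3 : IntervalIntegrable (fun t => |min 0 (w' t)|) MeasureTheory.volume a b :=
    hcont3.intervalIntegrable_of_Icc hab
  -- FTC : ∫ w'/(1+w²) = arctan (w b) - arctan (w a)
  have hftc : (∫ t in a..b, w' t / (1 + (w t) ^ 2))
      = Real.arctan (w b) - Real.arctan (w a) := by
    apply integral_eq_sub_of_hasDeriv_right_of_le hab
      ((Real.continuous_arctan.comp_continuousOn hwc))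
    · intro t ht
      have hmem : t ∈ Icc a b := Ioo_subset_Icc_self ht
      have hnhds : Icc a b ∈ nhds t := Icc_mem_nhds ht.1 ht.2
      have hd : HasDerivAt w (w' t) t := (hw t hmem).hasDerivAt hnhds
      have : HasDerivAt (fun u => Real.arctan (w u))
          (1 / (1 + (w t) ^ 2) * w' t) t :=
        (Real.hasDerivAt_arctan (w t)).comp t hd
      have := this.hasDerivWithinAt (s := Ioi t)
      convert this using 1
      · rfl
      ring
    · exact hi2
  -- pointwise bound
  have hpt : ∀ t ∈ Icc a b, |w' t| / (1 + (w t) ^ 2)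
      ≤ w' t / (1 + (w t) ^ 2) + 2 * |min 0 (w' t)| := by
    intro t _
    have hc : (1:ℝ) ≤ 1 + (w t) ^ 2 := le_add_of_nonneg_right (sq_nonneg _)
    have habs : |w' t| = w' t + 2 * |min 0 (w' t)| := by
      rcases le_or_gt 0 (w' t) with h | h
      · rw [abs_of_nonneg h, min_eq_left h]; simp
      · rw [abs_of_neg h, min_eq_right h.le, abs_of_neg h]; ring
    rw [habs, add_div]
    gcongr
    calc 2 * |min 0 (w' t)| / (1 + (w t) ^ 2) ≤ 2 * |min 0 (w' t)| / 1 := by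
          apply div_le_div_of_nonneg_left (by positivity) one_pos hc
      _ = 2 * |min 0 (w' t)| := by ring
  -- integral comparison
  have hisum : IntervalIntegrable (fun t => w' t / (1 + (w t) ^ 2) + 2 * |min 0 (w' t)|)
      MeasureTheory.volume a b := hi2.add ((hi3.const_mul 2))
  have hmono : (∫ t in a..b, |w' t| / (1 + (w t) ^ 2))
      ≤ ∫ t in a..b, (w' t / (1 + (w t) ^ 2) + 2 * |min 0 (w' t)|) :=
    integral_mono_on hab hi1 hisum hpt
  have hsplit : (∫ t in a..b, (w' t / (1 + (w t) ^ 2) + 2 * |min 0 (w' t)|))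
      = (∫ t in a..b, w' t / (1 + (w t) ^ 2)) + 2 * ∫ t in a..b, |min 0 (w' t)| := by
    rw [integral_add hi2 (hi3.const_mul 2), intervalIntegral.integral_const_mul]
  have harc : Real.arctan (w b) - Real.arctan (w a)
      ≤ Real.arccos (inner ℝ (Nmap ![0, w a]) (Nmap ![0, w b]) : ℝ) := by
    rw [arccos_inner_Nmap]
    exact le_abs_self _
  calc (∫ t in a..b, |w' t| / (1 + (w t) ^ 2))
      ≤ (∫ t in a..b, w' t / (1 + (w t) ^ 2)) + 2 * ∫ t in a..b, |min 0 (w' t)| := by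
        rw [← hsplit]; exact hmono
    _ = (Real.arctan (w b) - Real.arctan (w a)) + 2 * ∫ t in a..b, |min 0 (w' t)| := by
        rw [hftc]
    _ ≤ _ := by
        have := harc
        linarith
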